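/- arXiv:2106.05360 — 2 statements merged into one kernel-verified Lean document; each statement's English description precedes it below -/
import Mathlib

section
/- Under global substitutes (all voters share a single common partition of the project set into groups of substitutes, and each voter approves a subset of the groups, A(i) being the union of the approved groups), the Substitute Rule X (SRX) mechanism satisfies Strong-BPJR with substitutes: for every PB instance with global substitutes and every group S⊆V that is T-cohesive with substitutes for some T⊆A, the output bundle B of SRX satisfies |(∪_{i∈S} A(i)) ∩ B| ≥ |T|. -/
open Finset

/-- A voter's preference: a partition of her desired projects into groups of
substitutes, together with a marginal utility function per group
(`margU g j` is the marginal utility of the `j`-th funded project of group `g`). -/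
structure VoterPref (A : Type*) [DecidableEq A] where
  parts : Finset (Finset A)
  margU : Finset A → ℕ → ℝ

namespace VoterPref

variable {A : Type*} [DecidableEq A]

/-- `A(i)` : the set of desired projects of the voter. -/
def desired (v : VoterPref A) : Finset A := v.parts.sup id

/-- Well-formedness: groups are nonempty and pairwise disjoint, and marginal
utilities are nonnegative and nonincreasing. -/
def Valid (v : VoterPref A) : Prop :=
  (∀ g ∈ v.parts, g.Nonempty) ∧
  (∀ g₁ ∈ v.parts, ∀ g₂ ∈ v.parts, g₁ ≠ g₂ → Disjoint g₁ g₂) ∧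
  (∀ g ∈ v.parts, ∀ j : ℕ, 0 ≤ v.margU g j) ∧
  (∀ g ∈ v.parts, ∀ j : ℕ, v.margU g (j + 1) ≤ v.margU g j)

/-- The utility of a bundle `B`:  `u_i(B) = Σ_{g} Σ_{j=1}^{|g∩B|} u_{i,g}(j)`. -/
def util (v : VoterPref A) (B : Finset A) : ℝ :=
  ∑ g ∈ v.parts, ∑ j ∈ Finset.Icc 1 (g ∩ B).card, v.margU g j

/-- Marginal utility of project `p` given the already selected bundle `B`. -/
def margUtil (v : VoterPref A) (B : Finset A) (p : A) : ℝ :=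
  v.util (insert p B) - v.util B

/-- `p₁` and `p₂` are substitutes for the voter. -/
def sameGroup (v : VoterPref A) (p₁ p₂ : A) : Prop :=
  ∃ g ∈ v.parts, p₁ ∈ g ∧ p₂ ∈ g

end VoterPref

/-- A participatory budgeting instance `E = (V, A, cost, L)` together with the
voters' preferences. -/
structure PB (V A : Type*) [DecidableEq A] where
  cost : A → ℝ
  budget : ℝ
  pref : V → VoterPref A

noncomputable section
open scoped Classical

variable {V A : Type*} [Fintype V] [Fintype A] [DecidableEq A]

/-- `S` is `T`-cohesive with substitutes: `S` can afford `T` with its share of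
the budget, every voter in `S` desires every project of `T`, and no two
distinct projects of `T` are substitutes for any voter of `S`. -/
def TCohesiveSub (E : PB V A) (S : Finset V) (T : Finset A) : Prop :=
  (∑ p ∈ T, E.cost p) ≤ (E.budget / (Fintype.card V : ℝ)) * S.card ∧
  (∀ i ∈ S, T ⊆ (E.pref i).desired) ∧
  (∀ i ∈ S, ∀ p₁ ∈ T, ∀ p₂ ∈ T, p₁ ≠ p₂ → ¬ (E.pref i).sameGroup p₁ p₂)

/-- `p` is `q`-affordable given remaining budgets `b` and current utilities `U`. -/
def Affordable (E : PB V A) (U : V → A → ℝ) (b : V → ℝ) (p : A) (q : ℝ) : Prop :=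
  0 ≤ q ∧ E.cost p ≤ ∑ i, min (b i) (U i p * q)

/-- The minimal `q` for which `p` is `q`-affordable (junk value if none exists). -/
def qmin (E : PB V A) (U : V → A → ℝ) (b : V → ℝ) (p : A) : ℝ :=
  sInf {q | Affordable E U b p q}

/-- The set of unselected projects that are `q`-affordable for some `q`. -/
def affordSet (E : PB V A) (U : V → A → ℝ) (b : V → ℝ) (B : Finset A) : Finset A :=
  Finset.univ.filter fun p => p ∉ B ∧ ∃ q, Affordable E U b p q

/-- The project chosen at the current step: among affordable unselected
projects, minimize the minimal `q`, breaking ties by the (lexicographic)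
linear order on `A`; `none` if no project is affordable. -/
def choice [LinearOrder A] (E : PB V A) (U : V → A → ℝ) (b : V → ℝ) (B : Finset A) :
    Option A :=
  if h : (affordSet E U b B).Nonempty then
    some (((affordSet E U b B).filter fun p =>
        qmin E U b p = (affordSet E U b B).inf' h (qmin E U b)).min'
      (by
        obtain ⟨p, hp, hq⟩ := Finset.exists_mem_eq_inf' h (qmin E U b)
        exact ⟨p, Finset.mem_filter.mpr ⟨hp, hq.symm⟩⟩))
  else none

/-- The state (selected bundle, remaining budgets) of the generalized Rule X
after `t` steps, where `Ufun B i p` is the utility voter `i` assigns to project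
`p` when the bundle `B` has already been selected. -/
def state [LinearOrder A] (E : PB V A) (Ufun : Finset A → V → A → ℝ) :
    ℕ → Finset A × (V → ℝ)
  | 0 => (∅, fun _ => E.budget / (Fintype.card V : ℝ))
  | t + 1 =>
    let st := state E Ufun t
    match choice E (Ufun st.1) st.2 st.1 with
    | none => st
    | some p =>
        (insert p st.1,
          fun i => st.2 i - min (st.2 i) (Ufun st.1 i p * qmin E (Ufun st.1) st.2 p))

/-- The output of the generalized Rule X (after `|A|` steps the state is final). -/
def mechOutput [LinearOrder A] (E : PB V A) (Ufun : Finset A → V → A → ℝ) : Finset A :=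
  (state E Ufun (Fintype.card A)).1

/-- SRX uses, at every step, the current marginal utilities. -/
def srxU (E : PB V A) : Finset A → V → A → ℝ := fun B i p => (E.pref i).margUtil B p

/-- The Substitute Rule X mechanism. -/
def SRX [LinearOrder A] (E : PB V A) : Finset A := mechOutput E (srxU E)

/-- Rule X uses, throughout, utility 1 for every desired project. -/
def rxU (E : PB V A) : Finset A → V → A → ℝ :=
  fun _ i p => if p ∈ (E.pref i).desired then 1 else 0

/-- The (original) Rule X mechanism. -/
def RX [LinearOrder A] (E : PB V A) : Finset A := mechOutput E (rxU E)

/-- Global substitutes: all voters share one common partition `P` of the whole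
project set, each voter approving a sub-collection of its groups. -/
def GlobalSubs (E : PB V A) (P : Finset (Finset A)) : Prop :=
  (∀ g ∈ P, g.Nonempty) ∧
  (∀ g₁ ∈ P, ∀ g₂ ∈ P, g₁ ≠ g₂ → Disjoint g₁ g₂) ∧
  P.sup id = Finset.univ ∧
  (∀ i : V, (E.pref i).parts ⊆ P)

end

noncomputable section SRXAuxSec
open scoped Classical

namespace SRXAux

variable {V A : Type*} [Fintype V] [Fintype A] [DecidableEq A]

lemma margUtil_eq {v : VoterPref A} (hv : v.Valid) {g : Finset A} (hg : g ∈ v.parts)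
    {p : A} (hp : p ∈ g) {B : Finset A} (hpB : p ∉ B) :
    v.margUtil B p = v.margU g ((g ∩ B).card + 1) := by
  unfold VoterPref.margUtil VoterPref.util
  rw [← Finset.sum_sub_distrib, Finset.sum_eq_single g]
  · have h1 : g ∩ insert p B = insert p (g ∩ B) := by
      ext x
      simp only [Finset.mem_inter, Finset.mem_insert]
      constructor
      · rintro ⟨hxg, hx | hx⟩
        · exact Or.inl hx
        · exact Or.inr ⟨hxg, hx⟩
      · rintro (rfl | ⟨hxg, hx⟩)
        · exact ⟨hp, Or.inl rfl⟩
        · exact ⟨hxg, Or.inr hx⟩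
    have h2 : p ∉ g ∩ B := fun h => hpB (Finset.mem_inter.mp h).2
    rw [h1, Finset.card_insert_of_notMem h2,
      Finset.sum_Icc_succ_top (Nat.le_add_left 1 _) (v.margU g)]
    ring
  · intro g' hg' hne
    have hd : Disjoint g' g := hv.2.1 g' hg' g hg hne
    have hpg' : p ∉ g' := fun h => (Finset.disjoint_left.mp hd h) hp
    have h3 : g' ∩ insert p B = g' ∩ B := by
      ext x
      simp only [Finset.mem_inter, Finset.mem_insert]
      constructor
      · rintro ⟨hxg, rfl | hx⟩
        · exact absurd hxg hpg'
        · exact ⟨hxg, hx⟩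
      · rintro ⟨hxg, hx⟩; exact ⟨hxg, Or.inr hx⟩
    rw [h3]; ring
  · intro h; exact absurd hg h

lemma margUtil_zero_of_mem {v : VoterPref A} {p : A} {B : Finset A} (h : p ∈ B) :
    v.margUtil B p = 0 := by
  unfold VoterPref.margUtil
  rw [Finset.insert_eq_self.mpr h, sub_self]

lemma margUtil_zero_of_not_desired {v : VoterPref A} {p : A} {B : Finset A}
    (h : ∀ g ∈ v.parts, p ∉ g) :
    v.margUtil B p = 0 := by
  unfold VoterPref.margUtil VoterPref.util
  rw [sub_eq_zero]
  refine Finset.sum_congr rfl fun g hg => ?_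
  have h3 : g ∩ insert p B = g ∩ B := by
    ext x
    simp only [Finset.mem_inter, Finset.mem_insert]
    constructor
    · rintro ⟨hxg, rfl | hx⟩
      · exact absurd hxg (h g hg)
      · exact ⟨hxg, hx⟩
    · rintro ⟨hxg, hx⟩; exact ⟨hxg, Or.inr hx⟩
  rw [h3]

lemma margU_le_first {v : VoterPref A} (hv : v.Valid) {g : Finset A} (hg : g ∈ v.parts)
    (k : ℕ) : v.margU g (k + 1) ≤ v.margU g 1 := by
  induction k with
  | zero => exact le_rfl
  | succ n ih => exact le_trans (hv.2.2.2 g hg (n + 1)) ih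

lemma srxU_nonneg (E : PB V A) (hvalid : ∀ i : V, (E.pref i).Valid)
    (B : Finset A) (i : V) (p : A) : 0 ≤ srxU E B i p := by
  show 0 ≤ (E.pref i).margUtil B p
  by_cases hB : p ∈ B
  · rw [margUtil_zero_of_mem hB]
  · by_cases hg : ∃ g ∈ (E.pref i).parts, p ∈ g
    · obtain ⟨g, hg, hp⟩ := hg
      rw [margUtil_eq (hvalid i) hg hp hB]
      exact (hvalid i).2.2.1 g hg _
    · push_neg at hg
      rw [margUtil_zero_of_not_desired hg]

lemma srxU_le_I (E : PB V A) (I : ℝ) (hvalid : ∀ i : V, (E.pref i).Valid) (hI : 0 < I)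
    (hfirst : ∀ i : V, ∀ g ∈ (E.pref i).parts, (E.pref i).margU g 1 = I)
    (B : Finset A) (i : V) (p : A) : srxU E B i p ≤ I := by
  show (E.pref i).margUtil B p ≤ I
  by_cases hB : p ∈ B
  · rw [margUtil_zero_of_mem hB]; exact hI.le
  · by_cases hg : ∃ g ∈ (E.pref i).parts, p ∈ g
    · obtain ⟨g, hg, hp⟩ := hg
      rw [margUtil_eq (hvalid i) hg hp hB]
      calc (E.pref i).margU g ((g ∩ B).card + 1) ≤ (E.pref i).margU g 1 :=
            margU_le_first (hvalid i) hg _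
        _ = I := hfirst i g hg
    · push_neg at hg
      rw [margUtil_zero_of_not_desired hg]; exact hI.le

variable [LinearOrder A]

lemma state_succ_none (E : PB V A) (Ufun : Finset A → V → A → ℝ) (t : ℕ)
    (h : choice E (Ufun (state E Ufun t).1) (state E Ufun t).2 (state E Ufun t).1 = none) :
    state E Ufun (t + 1) = state E Ufun t := by
  rw [state]
  simp only [h]

lemma state_succ_some (E : PB V A) (Ufun : Finset A → V → A → ℝ) (t : ℕ) {w : A}
    (h : choice E (Ufun (state E Ufun t).1) (state E Ufun t).2 (state E Ufun t).1 = some w) :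
    state E Ufun (t + 1) = (insert w (state E Ufun t).1,
      fun i => (state E Ufun t).2 i - min ((state E Ufun t).2 i)
        (Ufun (state E Ufun t).1 i w *
          qmin E (Ufun (state E Ufun t).1) (state E Ufun t).2 w)) := by
  rw [state]
  simp only [h]

lemma state_budget_nonneg (E : PB V A) (Ufun : Finset A → V → A → ℝ)
    (hb0 : 0 ≤ E.budget) : ∀ (t : ℕ) (i : V), 0 ≤ (state E Ufun t).2 i := by
  intro t
  induction t with
  | zero =>
    intro i
    show (0:ℝ) ≤ E.budget / (Fintype.card V : ℝ)
    exact div_nonneg hb0 (Nat.cast_nonneg _)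
  | succ n ih =>
    intro i
    rcases hc : choice E (Ufun (state E Ufun n).1) (state E Ufun n).2 (state E Ufun n).1
      with _ | w
    · rw [state_succ_none E Ufun n hc]; exact ih i
    · rw [state_succ_some E Ufun n hc]
      simp only
      have h1 := min_le_left ((state E Ufun n).2 i)
        (Ufun (state E Ufun n).1 i w * qmin E (Ufun (state E Ufun n).1) (state E Ufun n).2 w)
      linarith [ih i]

lemma choice_spec {E : PB V A} {U : V → A → ℝ} {b : V → ℝ} {B : Finset A} {w : A}
    (h : choice E U b B = some w) :
    w ∈ affordSet E U b B ∧ ∀ p ∈ affordSet E U b B, qmin E U b w ≤ qmin E U b p := by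
  by_cases hne : (affordSet E U b B).Nonempty
  · rw [choice, dif_pos hne] at h
    have hw := Option.some_injective _ h
    have hmem := Finset.min'_mem ((affordSet E U b B).filter fun p =>
        qmin E U b p = (affordSet E U b B).inf' hne (qmin E U b))
      (by
        obtain ⟨p, hp, hq⟩ := Finset.exists_mem_eq_inf' hne (qmin E U b)
        exact ⟨p, Finset.mem_filter.mpr ⟨hp, hq.symm⟩⟩)
    rw [hw] at hmem
    rw [Finset.mem_filter] at hmem
    exact ⟨hmem.1, fun p hp => hmem.2 ▸ Finset.inf'_le _ hp⟩
  · rw [choice, dif_neg hne] at h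
    exact absurd h (by simp)

lemma choice_none {E : PB V A} {U : V → A → ℝ} {b : V → ℝ} {B : Finset A}
    (h : choice E U b B = none) : ¬ (affordSet E U b B).Nonempty := by
  intro hne
  rw [choice, dif_pos hne] at h
  exact absurd h (by simp)

lemma state_final (E : PB V A) (Ufun : Finset A → V → A → ℝ) :
    (state E Ufun (Fintype.card A)).1 = Finset.univ ∨
      choice E (Ufun (state E Ufun (Fintype.card A)).1) (state E Ufun (Fintype.card A)).2
        (state E Ufun (Fintype.card A)).1 = none := by
  have key : ∀ t : ℕ, (state E Ufun t).1.card = t ∨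
      choice E (Ufun (state E Ufun t).1) (state E Ufun t).2 (state E Ufun t).1 = none := by
    intro t
    induction t with
    | zero => left; simp [state]
    | succ n ih =>
      rcases hc : choice E (Ufun (state E Ufun n).1) (state E Ufun n).2 (state E Ufun n).1
        with _ | w
      · right
        rw [state_succ_none E Ufun n hc]
        exact hc
      · rcases ih with h | h
        · left
          have hw := (choice_spec hc).1
          rw [affordSet, Finset.mem_filter] at hw
          rw [state_succ_some E Ufun n hc]
          show (insert w (state E Ufun n).1).card = n + 1
          rw [Finset.card_insert_of_notMem hw.2.1, h]
        · rw [h] at hc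
          exact absurd hc (by simp)
  rcases key (Fintype.card A) with h | h
  · left
    exact (Finset.card_eq_iff_eq_univ _).mp h
  · right; exact h

lemma qmin_nonneg (E : PB V A) (U : V → A → ℝ) (b : V → ℝ) (p : A) : 0 ≤ qmin E U b p :=
  Real.sInf_nonneg fun _ hq => hq.1

lemma qmin_pay_le (E : PB V A) (U : V → A → ℝ) (b : V → ℝ) (p : A)
    (hb : ∀ i, 0 ≤ b i) (hU : ∀ i, 0 ≤ U i p) (hc : 0 < E.cost p)
    (hne : ∃ q, Affordable E U b p q) :
    ∑ i, min (b i) (U i p * qmin E U b p) ≤ E.cost p := by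
  have hbdd : BddBelow {q | Affordable E U b p q} := ⟨0, fun q hq => hq.1⟩
  have hQ0 : 0 ≤ qmin E U b p := qmin_nonneg E U b p
  set Q := qmin E U b p with hQdef
  rcases eq_or_lt_of_le hQ0 with h0 | hQpos
  · rw [← h0]
    have hz : ∑ i, min (b i) (U i p * 0) = 0 :=
      Finset.sum_eq_zero fun i _ => by rw [mul_zero]; exact min_eq_right (hb i)
    rw [hz]
    exact hc.le
  · refine le_of_forall_pos_le_add fun ε hε => ?_
    set M := ∑ i : V, U i p with hM
    have hM0 : 0 ≤ M := Finset.sum_nonneg fun i _ => hU i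
    have hM1 : (0:ℝ) < M + 1 := by linarith
    set δ := min (Q / 2) (ε / (M + 1)) with hδ
    have hδ0 : 0 < δ := lt_min (by linarith) (div_pos hε hM1)
    have hδQ : δ ≤ Q / 2 := min_le_left _ _
    have hδε : δ ≤ ε / (M + 1) := min_le_right _ _
    have hnotmem : (Q - δ) ∉ {q | Affordable E U b p q} := by
      intro hmem
      have h2 : Q ≤ Q - δ := csInf_le hbdd hmem
      linarith
    have hlt : ∑ i, min (b i) (U i p * (Q - δ)) < E.cost p := by
      by_contra hge
      push_neg at hge
      exact hnotmem ⟨by linarith, hge⟩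
    have hstep : ∀ i : V, min (b i) (U i p * Q) ≤ min (b i) (U i p * (Q - δ)) + U i p * δ := by
      intro i
      have h1 : U i p * Q = U i p * (Q - δ) + U i p * δ := by ring
      have h2 : 0 ≤ U i p * δ := mul_nonneg (hU i) hδ0.le
      calc min (b i) (U i p * Q)
          = min (b i) (U i p * (Q - δ) + U i p * δ) := by rw [← h1]
        _ ≤ min (b i + U i p * δ) (U i p * (Q - δ) + U i p * δ) :=
            min_le_min (by linarith) le_rfl
        _ = min (b i) (U i p * (Q - δ)) + U i p * δ := by rw [min_add_add_right]
    have hsum : ∑ i, min (b i) (U i p * Q) ≤ (∑ i, min (b i) (U i p * (Q - δ))) + M * δ := by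
      calc ∑ i, min (b i) (U i p * Q)
          ≤ ∑ i, (min (b i) (U i p * (Q - δ)) + U i p * δ) :=
            Finset.sum_le_sum fun i _ => hstep i
        _ = (∑ i, min (b i) (U i p * (Q - δ))) + (∑ i : V, U i p) * δ := by
            rw [Finset.sum_add_distrib, Finset.sum_mul]
        _ = _ := by rw [← hM]
    have hMδ : M * δ ≤ ε := by
      have h3 : M * δ ≤ (M + 1) * (ε / (M + 1)) :=
        mul_le_mul (by linarith) hδε hδ0.le (by linarith)
      have h4 : (M + 1) * (ε / (M + 1)) = ε := by
        field_simp
      linarith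
    linarith

end SRXAux

end SRXAuxSec


/-- Under global substitutes, SRX satisfies Strong-BPJR with substitutes: for
every PB instance with global substitutes and every group `S` that is
`T`-cohesive with substitutes, the SRX output `B` satisfies
`|(∪_{i∈S} A(i)) ∩ B| ≥ |T|`. -/
theorem srx_StrongBPJR_under_global_substitutes
    {V A : Type*} [Fintype V] [Fintype A] [DecidableEq A] [LinearOrder A]
    (E : PB V A) (P : Finset (Finset A)) (I : ℝ)
    (hV : 0 < Fintype.card V)
    (hcost : ∀ p : A, 0 < E.cost p)
    (hbudget : 0 < E.budget)
    (hvalid : ∀ i : V, (E.pref i).Valid)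
    (hI : 0 < I)
    (hfirst : ∀ i : V, ∀ g ∈ (E.pref i).parts, (E.pref i).margU g 1 = I)
    (hglobal : GlobalSubs E P)
    (S : Finset V) (T : Finset A)
    (hco : TCohesiveSub E S T) :
    T.card ≤ ((S.biUnion fun i => (E.pref i).desired) ∩ SRX E).card := by
  classical
  rcases S.eq_empty_or_nonempty with rfl | hS
  · have hT : T = ∅ := by
      by_contra hTne
      have h1 : 0 < ∑ p ∈ T, E.cost p :=
        Finset.sum_pos (fun q _ => hcost q) (Finset.nonempty_iff_ne_empty.mpr hTne)
      have h2 := hco.1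
      simp only [Finset.card_empty, Nat.cast_zero, mul_zero] at h2
      linarith
    simp [hT]
  obtain ⟨i₀, hi₀⟩ := hS
  set UA := S.biUnion (fun i => (E.pref i).desired) with hUA
  -- the common group of each project of `T`
  have hGex : ∀ p : A, ∃ g : Finset A, p ∈ T → g ∈ (E.pref i₀).parts ∧ p ∈ g := by
    intro p
    by_cases hp : p ∈ T
    · have h1 := hco.2.1 i₀ hi₀ hp
      rw [VoterPref.desired, Finset.mem_sup] at h1
      obtain ⟨g, hg, hpg⟩ := h1
      exact ⟨g, fun _ => ⟨hg, hpg⟩⟩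
    · exact ⟨∅, fun h => absurd h hp⟩
  choose G hG using hGex
  have hGmem : ∀ p ∈ T, G p ∈ (E.pref i₀).parts := fun p hp => (hG p hp).1
  have hGp : ∀ p ∈ T, p ∈ G p := fun p hp => (hG p hp).2
  have hGi : ∀ i ∈ S, ∀ p ∈ T, G p ∈ (E.pref i).parts := by
    intro i hi p hp
    have hT' := hco.2.1 i hi hp
    rw [VoterPref.desired, Finset.mem_sup] at hT'
    obtain ⟨g, hg, hpg⟩ := hT'
    have hgP : g ∈ P := hglobal.2.2.2 i hg
    have hGP : G p ∈ P := hglobal.2.2.2 i₀ (hGmem p hp)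
    by_cases he : g = G p
    · rw [← he]; exact hg
    · exact absurd (hGp p hp)
        (Finset.disjoint_left.mp (hglobal.2.1 g hgP (G p) hGP he) hpg)
  have hGdisj : ∀ p₁ ∈ T, ∀ p₂ ∈ T, p₁ ≠ p₂ → Disjoint (G p₁) (G p₂) := by
    intro p₁ h₁ p₂ h₂ hne
    have hne' : G p₁ ≠ G p₂ := by
      intro he
      exact hco.2.2 i₀ hi₀ p₁ h₁ p₂ h₂ hne
        ⟨G p₁, hGmem p₁ h₁, hGp p₁ h₁, he ▸ hGp p₂ h₂⟩
    exact hglobal.2.1 (G p₁) (hglobal.2.2.2 i₀ (hGmem p₁ h₁)) (G p₂)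
      (hglobal.2.2.2 i₀ (hGmem p₂ h₂)) hne'
  have hGUA : ∀ p ∈ T, G p ⊆ UA := by
    intro p hp x hx
    exact Finset.mem_biUnion.mpr ⟨i₀, hi₀,
      Finset.mem_sup.mpr ⟨G p, hGmem p hp, hx⟩⟩
  have hb : ∀ (t : ℕ) (i : V), 0 ≤ (state E (srxU E) t).2 i :=
    SRXAux.state_budget_nonneg E (srxU E) hbudget.le
  -- untouched projects of `T` have full marginal utility `I` for members of `S`
  have hUntouched : ∀ (t : ℕ) (p : A), p ∈ T → G p ∩ (state E (srxU E) t).1 = ∅ →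
      ∀ i ∈ S, srxU E (state E (srxU E) t).1 i p = I := by
    intro t p hp hGB i hi
    have hpB : p ∉ (state E (srxU E) t).1 := by
      intro h
      have h2 : p ∈ G p ∩ (state E (srxU E) t).1 := Finset.mem_inter.mpr ⟨hGp p hp, h⟩
      rw [hGB] at h2
      exact absurd h2 (Finset.notMem_empty p)
    show (E.pref i).margUtil (state E (srxU E) t).1 p = I
    rw [SRXAux.margUtil_eq (hvalid i) (hGi i hi p hp) (hGp p hp) hpB, hGB]
    simpa using hfirst i (G p) (hGi i hi p hp)
  -- affordability of untouched `T`-projects covered by the group budget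
  have hafford : ∀ (t : ℕ) (p : A), p ∈ T → G p ∩ (state E (srxU E) t).1 = ∅ →
      E.cost p ≤ ∑ i ∈ S, (state E (srxU E) t).2 i →
      ∃ q, Affordable E (srxU E (state E (srxU E) t).1) (state E (srxU E) t).2 p q := by
    intro t p hp hGB hΦ
    have hq0 : (0:ℝ) ≤ (∑ i : V, (state E (srxU E) t).2 i) / I :=
      div_nonneg (Finset.sum_nonneg fun i _ => hb t i) hI.le
    refine ⟨(∑ i : V, (state E (srxU E) t).2 i) / I, hq0, ?_⟩
    have hIq : I * ((∑ i : V, (state E (srxU E) t).2 i) / I) =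
        ∑ i : V, (state E (srxU E) t).2 i := by
      field_simp
    calc E.cost p ≤ ∑ i ∈ S, (state E (srxU E) t).2 i := hΦ
      _ = ∑ i ∈ S, min ((state E (srxU E) t).2 i)
            (srxU E (state E (srxU E) t).1 i p *
              ((∑ i : V, (state E (srxU E) t).2 i) / I)) := by
          refine Finset.sum_congr rfl fun i hi => ?_
          rw [hUntouched t p hp hGB i hi, hIq]
          exact (min_eq_left (Finset.single_le_sum (fun j _ => hb t j)
            (Finset.mem_univ i))).symm
      _ ≤ ∑ i : V, min ((state E (srxU E) t).2 i)
            (srxU E (state E (srxU E) t).1 i p *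
              ((∑ i : V, (state E (srxU E) t).2 i) / I)) := by
          refine Finset.sum_le_sum_of_subset_of_nonneg (Finset.subset_univ S) ?_
          intro i _ _
          exact le_min (hb t i)
            (mul_nonneg (SRXAux.srxU_nonneg E hvalid _ i p) hq0)
  -- the main invariant
  have main : ∀ t : ℕ, ∃ R : Finset A, R ⊆ T ∧
      (∀ p ∈ R, G p ∩ (state E (srxU E) t).1 = ∅) ∧
      T.card ≤ R.card + ((state E (srxU E) t).1 ∩ UA).card ∧
      ∑ p ∈ R, E.cost p ≤ ∑ i ∈ S, (state E (srxU E) t).2 i := by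
    intro t
    induction t with
    | zero =>
      refine ⟨T, Finset.Subset.refl T, ?_, ?_, ?_⟩
      · intro p _
        show G p ∩ (∅ : Finset A) = ∅
        exact Finset.inter_empty _
      · show T.card ≤ T.card + ((∅ : Finset A) ∩ UA).card
        simp
      · show ∑ p ∈ T, E.cost p ≤ ∑ _i ∈ S, E.budget / (Fintype.card V : ℝ)
        rw [Finset.sum_const, nsmul_eq_mul]
        calc ∑ p ∈ T, E.cost p ≤ E.budget / (Fintype.card V : ℝ) * S.card := hco.1
          _ = (S.card : ℝ) * (E.budget / (Fintype.card V : ℝ)) := mul_comm _ _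
    | succ n ih =>
      obtain ⟨R, hRT, hRun, hRcard, hRmoney⟩ := ih
      rcases hc : choice E (srxU E (state E (srxU E) n).1) (state E (srxU E) n).2
          (state E (srxU E) n).1 with _ | w
      · refine ⟨R, hRT, ?_, ?_, ?_⟩
        · rw [SRXAux.state_succ_none E (srxU E) n hc]; exact hRun
        · rw [SRXAux.state_succ_none E (srxU E) n hc]; exact hRcard
        · rw [SRXAux.state_succ_none E (srxU E) n hc]; exact hRmoney
      · have hwspec := SRXAux.choice_spec hc
        have hwa := hwspec.1
        rw [affordSet, Finset.mem_filter] at hwa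
        have hwB : w ∉ (state E (srxU E) n).1 := hwa.2.1
        have hstate := SRXAux.state_succ_some E (srxU E) n hc
        by_cases hwUA : w ∈ UA
        · rcases R.eq_empty_or_nonempty with rfl | hRne
          · refine ⟨∅, Finset.empty_subset T, by simp, ?_, ?_⟩
            · rw [hstate]
              show T.card ≤ (∅ : Finset A).card + ((insert w (state E (srxU E) n).1) ∩ UA).card
              rw [Finset.insert_inter_of_mem hwUA,
                Finset.card_insert_of_notMem (fun hh => hwB (Finset.mem_inter.mp hh).1)]
              simp only [Finset.card_empty, zero_add] at hRcard ⊢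
              omega
            · rw [Finset.sum_empty]
              exact Finset.sum_nonneg fun i _ => hb (n + 1) i
          · -- R nonempty, w ∈ UA : the main accounting step
            have hchoose : ∃ p₀ ∈ R, ∀ p ∈ R, p ≠ p₀ → w ∉ G p := by
              by_cases hex : ∃ p ∈ R, w ∈ G p
              · obtain ⟨p₀, hp₀, hw₀⟩ := hex
                refine ⟨p₀, hp₀, fun p hp hne hwp => ?_⟩
                exact Finset.disjoint_left.mp
                  (hGdisj p (hRT hp) p₀ (hRT hp₀) hne) hwp hw₀
              · push_neg at hex
                obtain ⟨p₀, hp₀⟩ := hRne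
                exact ⟨p₀, hp₀, fun p hp _ => hex p hp⟩
            obtain ⟨p₀, hp₀R, hp₀uniq⟩ := hchoose
            have hp₀T : p₀ ∈ T := hRT hp₀R
            have hp₀un : G p₀ ∩ (state E (srxU E) n).1 = ∅ := hRun p₀ hp₀R
            have hcostR : E.cost p₀ ≤ ∑ p ∈ R, E.cost p :=
              Finset.single_le_sum (fun p _ => (hcost p).le) hp₀R
            have hΦ : E.cost p₀ ≤ ∑ i ∈ S, (state E (srxU E) n).2 i :=
              le_trans hcostR hRmoney
            have haff := hafford n p₀ hp₀T hp₀un hΦ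
            have hp₀B : p₀ ∉ (state E (srxU E) n).1 := by
              intro h
              have h2 : p₀ ∈ G p₀ ∩ (state E (srxU E) n).1 :=
                Finset.mem_inter.mpr ⟨hGp p₀ hp₀T, h⟩
              rw [hp₀un] at h2
              exact absurd h2 (Finset.notMem_empty _)
            have hp₀aff : p₀ ∈ affordSet E (srxU E (state E (srxU E) n).1)
                (state E (srxU E) n).2 (state E (srxU E) n).1 := by
              rw [affordSet, Finset.mem_filter]
              exact ⟨Finset.mem_univ _, hp₀B, haff⟩
            have hqle : qmin E (srxU E (state E (srxU E) n).1) (state E (srxU E) n).2 w ≤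
                qmin E (srxU E (state E (srxU E) n).1) (state E (srxU E) n).2 p₀ :=
              hwspec.2 p₀ hp₀aff
            have hqw0 : 0 ≤ qmin E (srxU E (state E (srxU E) n).1) (state E (srxU E) n).2 w :=
              SRXAux.qmin_nonneg _ _ _ _
            have hq₀0 : 0 ≤ qmin E (srxU E (state E (srxU E) n).1) (state E (srxU E) n).2 p₀ :=
              SRXAux.qmin_nonneg _ _ _ _
            have hpaysum : ∑ i ∈ S, min ((state E (srxU E) n).2 i)
                (srxU E (state E (srxU E) n).1 i w *
                  qmin E (srxU E (state E (srxU E) n).1) (state E (srxU E) n).2 w) ≤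
                E.cost p₀ := by
              calc ∑ i ∈ S, min ((state E (srxU E) n).2 i)
                    (srxU E (state E (srxU E) n).1 i w *
                      qmin E (srxU E (state E (srxU E) n).1) (state E (srxU E) n).2 w)
                  ≤ ∑ i ∈ S, min ((state E (srxU E) n).2 i)
                    (srxU E (state E (srxU E) n).1 i p₀ *
                      qmin E (srxU E (state E (srxU E) n).1) (state E (srxU E) n).2 p₀) := by
                    refine Finset.sum_le_sum fun i hi => min_le_min le_rfl ?_
                    rw [hUntouched n p₀ hp₀T hp₀un i hi]
                    exact mul_le_mul (SRXAux.srxU_le_I E I hvalid hI hfirst _ i w)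
                      hqle hqw0 hI.le
                _ ≤ ∑ i : V, min ((state E (srxU E) n).2 i)
                    (srxU E (state E (srxU E) n).1 i p₀ *
                      qmin E (srxU E (state E (srxU E) n).1) (state E (srxU E) n).2 p₀) := by
                    refine Finset.sum_le_sum_of_subset_of_nonneg (Finset.subset_univ S) ?_
                    intro i _ _
                    exact le_min (hb n i)
                      (mul_nonneg (SRXAux.srxU_nonneg E hvalid _ i p₀) hq₀0)
                _ ≤ E.cost p₀ := SRXAux.qmin_pay_le E _ _ p₀ (hb n)
                    (fun i => SRXAux.srxU_nonneg E hvalid _ i p₀) (hcost p₀) haff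
            refine ⟨R.erase p₀, (Finset.erase_subset _ _).trans hRT, ?_, ?_, ?_⟩
            · intro p hp
              rw [hstate]
              show G p ∩ (insert w (state E (srxU E) n).1) = ∅
              have hpR : p ∈ R := Finset.mem_of_mem_erase hp
              have hpne : p ≠ p₀ := Finset.ne_of_mem_erase hp
              have hwG : w ∉ G p := hp₀uniq p hpR hpne
              rw [Finset.eq_empty_iff_forall_notMem]
              intro x hx
              rcases Finset.mem_inter.mp hx with ⟨hxG, hxB⟩
              rcases Finset.mem_insert.mp hxB with rfl | hxB
              · exact hwG hxG
              · have h5 := hRun p hpR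
                rw [Finset.eq_empty_iff_forall_notMem] at h5
                exact h5 x (Finset.mem_inter.mpr ⟨hxG, hxB⟩)
            · rw [hstate]
              show T.card ≤ (R.erase p₀).card + ((insert w (state E (srxU E) n).1) ∩ UA).card
              rw [Finset.insert_inter_of_mem hwUA,
                Finset.card_insert_of_notMem (fun hh => hwB (Finset.mem_inter.mp hh).1)]
              have h3 : (R.erase p₀).card + 1 = R.card := Finset.card_erase_add_one hp₀R
              omega
            · rw [hstate]
              show ∑ p ∈ R.erase p₀, E.cost p ≤ ∑ i ∈ S, ((state E (srxU E) n).2 i -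
                min ((state E (srxU E) n).2 i) (srxU E (state E (srxU E) n).1 i w *
                  qmin E (srxU E (state E (srxU E) n).1) (state E (srxU E) n).2 w))
              rw [Finset.sum_sub_distrib]
              have h4 : ∑ p ∈ R.erase p₀, E.cost p + E.cost p₀ = ∑ p ∈ R, E.cost p :=
                Finset.sum_erase_add R _ hp₀R
              linarith
        · -- w ∉ UA : nothing changes for `S`
          refine ⟨R, hRT, ?_, ?_, ?_⟩
          · intro p hp
            rw [hstate]
            show G p ∩ (insert w (state E (srxU E) n).1) = ∅
            have hwG : w ∉ G p := fun hw => hwUA (hGUA p (hRT hp) hw)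
            rw [Finset.eq_empty_iff_forall_notMem]
            intro x hx
            rcases Finset.mem_inter.mp hx with ⟨hxG, hxB⟩
            rcases Finset.mem_insert.mp hxB with rfl | hxB
            · exact hwG hxG
            · have h5 := hRun p hp
              rw [Finset.eq_empty_iff_forall_notMem] at h5
              exact h5 x (Finset.mem_inter.mpr ⟨hxG, hxB⟩)
          · rw [hstate]
            show T.card ≤ R.card + ((insert w (state E (srxU E) n).1) ∩ UA).card
            rw [Finset.insert_inter_of_notMem hwUA]
            exact hRcard
          · rw [hstate]
            show ∑ p ∈ R, E.cost p ≤ ∑ i ∈ S, ((state E (srxU E) n).2 i -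
              min ((state E (srxU E) n).2 i) (srxU E (state E (srxU E) n).1 i w *
                qmin E (srxU E (state E (srxU E) n).1) (state E (srxU E) n).2 w))
            have hzero : ∀ i ∈ S, (state E (srxU E) n).2 i -
                min ((state E (srxU E) n).2 i) (srxU E (state E (srxU E) n).1 i w *
                  qmin E (srxU E (state E (srxU E) n).1) (state E (srxU E) n).2 w) =
                (state E (srxU E) n).2 i := by
              intro i hi
              have hz : srxU E (state E (srxU E) n).1 i w = 0 := by
                show (E.pref i).margUtil (state E (srxU E) n).1 w = 0
                apply SRXAux.margUtil_zero_of_not_desired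
                intro g hg hwg
                exact hwUA (Finset.mem_biUnion.mpr ⟨i, hi,
                  Finset.mem_sup.mpr ⟨g, hg, hwg⟩⟩)
              rw [hz, zero_mul, min_eq_right (hb n i), sub_zero]
            rw [Finset.sum_congr rfl hzero]
            exact hRmoney
  -- conclusion
  by_contra hcon
  push_neg at hcon
  obtain ⟨R, hRT, hRun, hRcard, hRmoney⟩ := main (Fintype.card A)
  have hinter : ((state E (srxU E) (Fintype.card A)).1 ∩ UA).card = (UA ∩ SRX E).card := by
    rw [Finset.inter_comm]
    rfl
  have hRne : R.Nonempty := by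
    rcases R.eq_empty_or_nonempty with rfl | h
    · exfalso
      rw [Finset.card_empty, zero_add, hinter] at hRcard
      omega
    · exact h
  obtain ⟨c, hcR⟩ := hRne
  have hcT : c ∈ T := hRT hcR
  have hcun : G c ∩ (state E (srxU E) (Fintype.card A)).1 = ∅ := hRun c hcR
  have hcB : c ∉ (state E (srxU E) (Fintype.card A)).1 := by
    intro h
    have h2 : c ∈ G c ∩ (state E (srxU E) (Fintype.card A)).1 :=
      Finset.mem_inter.mpr ⟨hGp c hcT, h⟩
    rw [hcun] at h2
    exact absurd h2 (Finset.notMem_empty _)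
  have hΦc : E.cost c ≤ ∑ i ∈ S, (state E (srxU E) (Fintype.card A)).2 i :=
    le_trans (Finset.single_le_sum (fun p _ => (hcost p).le) hcR) hRmoney
  have haffc := hafford (Fintype.card A) c hcT hcun hΦc
  rcases SRXAux.state_final E (srxU E) with huniv | hnone
  · rw [huniv] at hcB
    exact hcB (Finset.mem_univ c)
  · exact SRXAux.choice_none hnone ⟨c, by
      rw [affordSet, Finset.mem_filter]
      exact ⟨Finset.mem_univ _, hcB, haffc⟩⟩
end

section
/- Let S⊆V be a group that is T-cohesive with substitutes for T⊆A, and consider an execution of SRX. For each step t let B_t be the set of projects selected by SRX up to and including step t, let T_t = {a∈T : g(a) ∩ B_t = ∅} be the projects of T for which neither the project nor any of its substitutes has been selected, and let c_tmin be the cost of the cheapest project in T_{t−1} divided by |S|. If at step t it holds that T_t ≠ ∅ and every voter i∈S has remaining budget b_i(t) ≥ c_tmin, then every voter in S pays at most c_tmin toward the project chosen by SRX at step t. -/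
open Finset

/-- `T_t`-style set: the projects of `T` such that neither the project nor any
of its substitutes (w.r.t. the common partition `P`) belongs to `B`. -/
def Tleft {A : Type*} [DecidableEq A] (P : Finset (Finset A)) (T B : Finset A) :
    Finset A :=
  T.filter fun a => ∀ g ∈ P, a ∈ g → ∀ b ∈ g, b ∉ B

section Helpers

open scoped Classical

variable {V A : Type*} [Fintype V] [Fintype A] [DecidableEq A]

lemma margU_le_first {v : VoterPref A} (hv : v.Valid) {g : Finset A} (hg : g ∈ v.parts) :
    ∀ k : ℕ, v.margU g (k + 1) ≤ v.margU g 1 := by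
  intro k
  induction k with
  | zero => exact le_rfl
  | succ k ih => exact (hv.2.2.2 g hg (k + 1)).trans ih

lemma margUtil_eq_of_mem {v : VoterPref A} (hv : v.Valid) {B : Finset A} {p : A}
    (hpB : p ∉ B) {g : Finset A} (hg : g ∈ v.parts) (hpg : p ∈ g) :
    v.margUtil B p = v.margU g ((g ∩ B).card + 1) := by
  classical
  unfold VoterPref.margUtil VoterPref.util
  rw [← Finset.sum_sub_distrib, Finset.sum_eq_single g]
  · have h1 : g ∩ insert p B = insert p (g ∩ B) := by
      ext x
      simp only [Finset.mem_inter, Finset.mem_insert]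
      constructor
      · rintro ⟨hxg, hx | hx⟩
        · exact Or.inl hx
        · exact Or.inr ⟨hxg, hx⟩
      · rintro (rfl | ⟨hxg, hx⟩)
        · exact ⟨hpg, Or.inl rfl⟩
        · exact ⟨hxg, Or.inr hx⟩
    have h2 : p ∉ g ∩ B := fun h => hpB (Finset.mem_inter.mp h).2
    rw [h1, Finset.card_insert_of_notMem h2,
      Finset.sum_Icc_succ_top (Nat.one_le_iff_ne_zero.mpr (Nat.succ_ne_zero _))]
    ring
  · intro g' hg' hne
    have hpg' : p ∉ g' := by
      intro hp
      exact (Finset.disjoint_left.mp (hv.2.1 g' hg' g hg hne) hp) hpg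
    have : g' ∩ insert p B = g' ∩ B := by
      ext x
      simp only [Finset.mem_inter, Finset.mem_insert]
      constructor
      · rintro ⟨hxg, rfl | hx⟩
        · exact absurd hxg hpg'
        · exact ⟨hxg, hx⟩
      · rintro ⟨hxg, hx⟩; exact ⟨hxg, Or.inr hx⟩
    rw [this, sub_self]
  · intro h; exact absurd hg h

lemma margUtil_eq_zero_of_mem {v : VoterPref A} {B : Finset A} {p : A} (hpB : p ∈ B) :
    v.margUtil B p = 0 := by
  unfold VoterPref.margUtil
  rw [Finset.insert_eq_self.mpr hpB, sub_self]

lemma margUtil_eq_zero_of_not_desired {v : VoterPref A} {B : Finset A} {p : A}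
    (h : ∀ g ∈ v.parts, p ∉ g) : v.margUtil B p = 0 := by
  unfold VoterPref.margUtil VoterPref.util
  rw [sub_eq_zero]
  refine Finset.sum_congr rfl fun g hg => ?_
  have : g ∩ insert p B = g ∩ B := by
    ext x
    simp only [Finset.mem_inter, Finset.mem_insert]
    constructor
    · rintro ⟨hxg, rfl | hx⟩
      · exact absurd hxg (h g hg)
      · exact ⟨hxg, hx⟩
    · rintro ⟨hxg, hx⟩; exact ⟨hxg, Or.inr hx⟩
  rw [this]

lemma margUtil_bounds {v : VoterPref A} (hv : v.Valid) {I : ℝ} (hI : 0 ≤ I)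
    (hfirst : ∀ g ∈ v.parts, v.margU g 1 = I) (B : Finset A) (p : A) :
    0 ≤ v.margUtil B p ∧ v.margUtil B p ≤ I := by
  by_cases hpB : p ∈ B
  · rw [margUtil_eq_zero_of_mem hpB]; exact ⟨le_rfl, hI⟩
  by_cases hdes : ∃ g ∈ v.parts, p ∈ g
  · obtain ⟨g, hg, hpg⟩ := hdes
    rw [margUtil_eq_of_mem hv hpB hg hpg]
    exact ⟨hv.2.2.1 g hg _, (margU_le_first hv hg _).trans_eq (hfirst g hg)⟩
  · push_neg at hdes
    rw [margUtil_eq_zero_of_not_desired hdes]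
    exact ⟨le_rfl, hI⟩

lemma qmin_le_of_affordable {E : PB V A} {U : V → A → ℝ} {b : V → ℝ} {p : A} {q : ℝ}
    (hq : Affordable E U b p q) : qmin E U b p ≤ q :=
  csInf_le ⟨0, fun _ hr => hr.1⟩ hq

lemma qmin_nonneg {E : PB V A} {U : V → A → ℝ} {b : V → ℝ} {p : A}
    (h : ∃ q, Affordable E U b p q) : 0 ≤ qmin E U b p :=
  le_csInf h fun _ hr => hr.1

lemma choice_some_spec [LinearOrder A] {E : PB V A} {U : V → A → ℝ} {b : V → ℝ}
    {B : Finset A} {p : A} (h : choice E U b B = some p) :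
    p ∈ affordSet E U b B ∧ ∀ a ∈ affordSet E U b B, qmin E U b p ≤ qmin E U b a := by
  classical
  unfold choice at h
  split at h
  case isTrue hne =>
    have hp := Option.some.inj h
    have hmem := Finset.min'_mem ((affordSet E U b B).filter fun p =>
      qmin E U b p = (affordSet E U b B).inf' hne (qmin E U b))
      (by
        obtain ⟨r, hr, hq⟩ := Finset.exists_mem_eq_inf' hne (qmin E U b)
        exact ⟨r, Finset.mem_filter.mpr ⟨hr, hq.symm⟩⟩)
    rw [hp] at hmem
    obtain ⟨hpaf, hpq⟩ := Finset.mem_filter.mp hmem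
    exact ⟨hpaf, fun a ha => hpq ▸ Finset.inf'_le _ ha⟩
  case isFalse => exact absurd h (by simp)

lemma state_succ [LinearOrder A] (E : PB V A) (Ufun : Finset A → V → A → ℝ) (t : ℕ) :
    state E Ufun (t + 1) =
      match choice E (Ufun (state E Ufun t).1) (state E Ufun t).2 (state E Ufun t).1 with
      | none => state E Ufun t
      | some p =>
          (insert p (state E Ufun t).1,
            fun i => (state E Ufun t).2 i -
              min ((state E Ufun t).2 i)
                (Ufun (state E Ufun t).1 i p *
                  qmin E (Ufun (state E Ufun t).1) (state E Ufun t).2 p)) := rfl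

lemma state_budget_nonneg [LinearOrder A] (E : PB V A) (Ufun : Finset A → V → A → ℝ)
    (hb : 0 ≤ E.budget) : ∀ t i, 0 ≤ (state E Ufun t).2 i := by
  intro t
  induction t with
  | zero => exact fun i => div_nonneg hb (Nat.cast_nonneg _)
  | succ t ih =>
    intro i
    rw [state_succ]
    cases hch : choice E (Ufun (state E Ufun t).1) (state E Ufun t).2 (state E Ufun t).1 with
    | none => exact ih i
    | some p => exact sub_nonneg.mpr (min_le_left _ _)

end Helpers

/-- Lemma 1: let `S` be `T`-cohesive with substitutes (under global
substitutes) and consider an SRX execution; `B_t = (state E (srxU E) t).1` and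
`b_i(t) = (state E (srxU E) (t-1)).2 i` is the budget just before step `t`.
Let `c_tmin` be the cost of the cheapest project of `T_{t-1}` divided by `|S|`.
If at step `t ≥ 1` we have `T_t ≠ ∅` and every `i ∈ S` has `b_i(t) ≥ c_tmin`,
then every voter of `S` pays at most `c_tmin` at step `t`. -/
theorem srx_payment_bound_lemma
    {V A : Type*} [Fintype V] [Fintype A] [DecidableEq A] [LinearOrder A]
    (E : PB V A) (P : Finset (Finset A)) (I : ℝ)
    (hV : 0 < Fintype.card V)
    (hcost : ∀ p : A, 0 < E.cost p)
    (hbudget : 0 < E.budget)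
    (hvalid : ∀ i : V, (E.pref i).Valid)
    (hI : 0 < I)
    (hfirst : ∀ i : V, ∀ g ∈ (E.pref i).parts, (E.pref i).margU g 1 = I)
    (hglobal : GlobalSubs E P)
    (S : Finset V) (T : Finset A)
    (hco : TCohesiveSub E S T)
    (t : ℕ) (ht : 1 ≤ t)
    (hprev : (Tleft P T (state E (srxU E) (t - 1)).1).Nonempty)
    (hcur : (Tleft P T (state E (srxU E) t).1).Nonempty)
    (hbud : ∀ i ∈ S,
      (Tleft P T (state E (srxU E) (t - 1)).1).inf' hprev E.cost / (S.card : ℝ) ≤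
        (state E (srxU E) (t - 1)).2 i) :
    ∀ i ∈ S,
      (state E (srxU E) (t - 1)).2 i - (state E (srxU E) t).2 i ≤
        (Tleft P T (state E (srxU E) (t - 1)).1).inf' hprev E.cost / (S.card : ℝ) := by
  classical
  obtain ⟨s, rfl⟩ : ∃ s, t = s + 1 := ⟨t - 1, (Nat.succ_pred_eq_of_pos ht).symm⟩
  simp only [Nat.add_sub_cancel] at hprev hbud ⊢
  intro i hi
  have hSne : S.Nonempty := ⟨i, hi⟩
  have hScard : (0 : ℝ) < S.card := by exact_mod_cast Finset.card_pos.mpr hSne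
  set st := state E (srxU E) s with hst
  set c : ℝ := (Tleft P T st.1).inf' hprev E.cost with hc
  obtain ⟨a, haT, hac⟩ := Finset.exists_mem_eq_inf' hprev E.cost
  have hca : c = E.cost a := hac
  have hcpos : 0 < c := hca ▸ hcost a
  have hcS : 0 ≤ c / S.card := le_of_lt (div_pos hcpos hScard)
  have hmemT : a ∈ T ∧ ∀ g ∈ P, a ∈ g → ∀ b ∈ g, b ∉ st.1 := by
    simpa [Tleft] using haT
  have haB : a ∉ st.1 := by
    have ha : a ∈ P.sup id := by rw [hglobal.2.2.1]; exact Finset.mem_univ a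
    obtain ⟨g, hgP, hag⟩ := Finset.mem_sup.mp ha
    exact hmemT.2 g hgP hag a hag
  have hU : ∀ j ∈ S, srxU E st.1 j a = I := by
    intro j hj
    have hdes : a ∈ (E.pref j).desired := hco.2.1 j hj hmemT.1
    obtain ⟨g, hg, hag⟩ := Finset.mem_sup.mp hdes
    have hgB : (g ∩ st.1).card = 0 := by
      rw [Finset.card_eq_zero, Finset.eq_empty_iff_forall_notMem]
      intro x hx
      obtain ⟨hxg, hxB⟩ := Finset.mem_inter.mp hx
      exact hmemT.2 g (hglobal.2.2.2 j hg) hag x hxg hxB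
    show (E.pref j).margUtil st.1 a = I
    rw [margUtil_eq_of_mem (hvalid j) haB hg hag, hgB]
    exact hfirst j g hg
  have hUb : ∀ j : V, ∀ p : A, 0 ≤ srxU E st.1 j p ∧ srxU E st.1 j p ≤ I :=
    fun j p => margUtil_bounds (hvalid j) hI.le (hfirst j) st.1 p
  have hbnn : ∀ j : V, 0 ≤ st.2 j :=
    fun j => state_budget_nonneg E (srxU E) hbudget.le s j
  set q0 : ℝ := c / (S.card * I) with hq0
  have hq0nn : 0 ≤ q0 := le_of_lt (div_pos hcpos (mul_pos hScard hI))
  have hIq0 : I * q0 = c / S.card := by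
    rw [hq0]; field_simp
  have hafford : Affordable E (srxU E st.1) st.2 a q0 := by
    refine ⟨hq0nn, ?_⟩
    have h1 : ∀ j ∈ S, min (st.2 j) (srxU E st.1 j a * q0) = c / S.card := by
      intro j hj
      rw [hU j hj, hIq0]
      exact min_eq_right (hbud j hj)
    have h2 : (∑ j ∈ S, min (st.2 j) (srxU E st.1 j a * q0)) = E.cost a := by
      rw [Finset.sum_congr rfl h1, Finset.sum_const, nsmul_eq_mul, ← hca]
      field_simp
    calc E.cost a = ∑ j ∈ S, min (st.2 j) (srxU E st.1 j a * q0) := h2.symm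
      _ ≤ ∑ j, min (st.2 j) (srxU E st.1 j a * q0) :=
          Finset.sum_le_sum_of_subset_of_nonneg (Finset.subset_univ S)
            (fun j _ _ => le_min (hbnn j) (mul_nonneg (hUb j a).1 hq0nn))
  have haaf : a ∈ affordSet E (srxU E st.1) st.2 st.1 :=
    Finset.mem_filter.mpr ⟨Finset.mem_univ a, haB, ⟨q0, hafford⟩⟩
  rw [state_succ]
  cases hch : choice E (srxU E st.1) st.2 st.1 with
  | none => simpa using hcS
  | some p =>
    obtain ⟨hpaf, hpmin⟩ := choice_some_spec hch
    set q := qmin E (srxU E st.1) st.2 p with hq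
    have hqq0 : q ≤ q0 := (hpmin a haaf).trans (qmin_le_of_affordable hafford)
    have hqnn : 0 ≤ q := qmin_nonneg (Finset.mem_filter.mp hpaf).2.2
    have : st.2 i - (st.2 i - min (st.2 i) (srxU E st.1 i p * q)) =
        min (st.2 i) (srxU E st.1 i p * q) := by ring
    rw [this]
    calc min (st.2 i) (srxU E st.1 i p * q) ≤ srxU E st.1 i p * q := min_le_right _ _
      _ ≤ I * q := mul_le_mul_of_nonneg_right (hUb i p).2 hqnn
      _ ≤ I * q0 := mul_le_mul_of_nonneg_left hqq0 hI.le
      _ = c / S.card := hIq0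
end
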